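/- Let E'/E be a finite extension of fields of characteristic zero, σ' a ring automorphism of E' with σ'∘σ' = id which maps E to itself and restricts to a nontrivial automorphism σ of E. Let α ∈ E' satisfy σ'(α) = α and E' = E[α] (α generates E' as an E-algebra). Let V' be a finite-dimensional E'-vector space. Then the map Φ' ↦ Tr_{E'/E} ∘ Φ' is a bijection from the set of nondegenerate σ'-hermitian forms on the E'-vector space V' onto the set of nondegenerate σ-hermitian forms Ψ on V', regarded as an E-vector space, that satisfy Ψ(α·x, y) = Ψ(x, α·y) for all x, y ∈ V'. -/

import Mathlib

/-- A `σ`-hermitian form on a vector space `V` over a field `K`: additive in each variable,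
`σ`-semilinear in the first, linear in the second, with `Φ (y, x) = σ (Φ (x, y))`. -/
def IsHermitianForm {K V : Type*} [Field K] [AddCommGroup V] [Module K V]
    (σ : K → K) (Φ : V → V → K) : Prop :=
  (∀ x x' y, Φ (x + x') y = Φ x y + Φ x' y) ∧
  (∀ x y y', Φ x (y + y') = Φ x y + Φ x y') ∧
  (∀ (a : K) (x y : V), Φ (a • x) y = σ a * Φ x y) ∧
  (∀ (a : K) (x y : V), Φ x (a • y) = a * Φ x y) ∧
  (∀ x y, Φ y x = σ (Φ x y))

/-- Let `E'/E` be a finite extension, `σ'` an involution of `E'`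
restricting to a nontrivial involution `σ` of `E`, and `α ∈ E'` fixed by `σ'` and
generating `E'` over `E`. Then `Φ' ↦ Tr_{E'/E} ∘ Φ'` is a bijection from the set of
nondegenerate `σ'`-hermitian forms on an `E'`-vector space `V'` onto the set of
nondegenerate `σ`-hermitian forms `Ψ` on `V'` viewed over `E` satisfying
`Ψ (α • x, y) = Ψ (x, α • y)`. -/
theorem stmt_14 (E E' : Type*) [Field E] [Field E'] [CharZero E] [Algebra E E']
    [FiniteDimensional E E']
    (σ' : E' ≃+* E') (hσ' : ∀ x, σ' (σ' x) = x)
    (σ : E ≃+* E) (hres : ∀ x : E, σ' (algebraMap E E' x) = algebraMap E E' (σ x))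
    (hnt : σ ≠ RingEquiv.refl E)
    (α : E') (hα : σ' α = α) (hgen : Algebra.adjoin E ({α} : Set E') = ⊤)
    (V' : Type*) [AddCommGroup V'] [Module E' V'] [Module E V'] [IsScalarTower E E' V']
    [FiniteDimensional E' V'] :
    Set.BijOn (fun (Φ : V' → V' → E') (x y : V') => Algebra.trace E E' (Φ x y))
      {Φ : V' → V' → E' | IsHermitianForm (⇑σ') Φ ∧ ∀ x, (∀ y, Φ x y = 0) → x = 0}
      {Ψ : V' → V' → E | IsHermitianForm (⇑σ) Ψ ∧ (∀ x, (∀ y, Ψ x y = 0) → x = 0) ∧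
        ∀ x y : V', Ψ (α • x) y = Ψ x (α • y)} := by
  classical
  -- trace commutes with the involutions
  have htr : ∀ z : E', Algebra.trace E E' (σ' z) = σ (Algebra.trace E E' z) := by
    intro z
    have he : (algebraMap E E').comp (σ : E →+* E)
        = (σ' : E' →+* E').comp (algebraMap E E') := by
      ext a
      exact (hres a).symm
    have h := Algebra.trace_eq_of_equiv_equiv σ σ' he z
    rw [h, RingEquiv.apply_symm_apply]
  have hB : (Algebra.traceForm E E').Nondegenerate := traceForm_nondegenerate E E'
  have key : ∀ c : E', (∀ a : E', Algebra.trace E E' (c * a) = 0) → c = 0 := by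
    intro c h
    exact hB.1 c (fun n => h n)
  have uniq : ∀ c d : E',
      (∀ a : E', Algebra.trace E E' (c * a) = Algebra.trace E E' (d * a)) → c = d := by
    intro c d h
    have : c - d = 0 := key (c - d) (fun a => by rw [sub_mul, map_sub, h a, sub_self])
    exact sub_eq_zero.mp this
  have hsmulE : ∀ (a : E) (x : V'), a • x = algebraMap E E' a • x :=
    fun a x => (algebraMap_smul E' a x).symm
  have htrsmul : ∀ (a : E) (z : E'),
      Algebra.trace E E' (algebraMap E E' a * z) = a * Algebra.trace E E' z := by
    intro a z
    rw [← Algebra.smul_def, map_smul, smul_eq_mul]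
  refine ⟨?_, ?_, ?_⟩
  · -- MapsTo
    rintro Φ ⟨⟨h1, h2, h3, h4, h5⟩, hnd⟩
    refine ⟨⟨?_, ?_, ?_, ?_, ?_⟩, ?_, ?_⟩
    · intro x x' y
      simp only [h1, map_add]
    · intro x y y'
      simp only [h2, map_add]
    · intro a x y
      show Algebra.trace E E' (Φ (a • x) y) = σ a * Algebra.trace E E' (Φ x y)
      rw [hsmulE, h3, hres, htrsmul]
    · intro a x y
      show Algebra.trace E E' (Φ x (a • y)) = a * Algebra.trace E E' (Φ x y)
      rw [hsmulE, h4, htrsmul]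
    · intro x y
      show Algebra.trace E E' (Φ y x) = σ (Algebra.trace E E' (Φ x y))
      rw [h5, htr]
    · intro x hx
      apply hnd x
      intro y
      apply key
      intro a
      show Algebra.trace E E' (Φ x y * a) = 0
      rw [mul_comm, ← h4 a x y]
      exact hx (a • y)
    · intro x y
      show Algebra.trace E E' (Φ (α • x) y) = Algebra.trace E E' (Φ x (α • y))
      rw [h3, h4, hα]
  · -- InjOn
    rintro Φ₁ ⟨⟨_, _, _, h4₁, _⟩, _⟩ Φ₂ ⟨⟨_, _, _, h4₂, _⟩, _⟩ heq
    funext x y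
    apply uniq
    intro a
    have h := congrFun (congrFun heq x) (a • y)
    simp only at h
    rw [h4₁, h4₂] at h
    calc Algebra.trace E E' (Φ₁ x y * a) = Algebra.trace E E' (a * Φ₁ x y) := by rw [mul_comm]
      _ = Algebra.trace E E' (a * Φ₂ x y) := h
      _ = Algebra.trace E E' (Φ₂ x y * a) := by rw [mul_comm]
  · -- SurjOn
    rintro Ψ ⟨⟨g1, g2, g3, g4, g5⟩, gnd, gal⟩
    -- derived: Ψ (b • x) y = Ψ x (σ' b • y) for all b in E'
    have hE' : ∀ (b : E') (x y : V'), Ψ (b • x) y = Ψ x (σ' b • y) := by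
      intro b
      have hb : b ∈ Algebra.adjoin E ({α} : Set E') := by
        rw [hgen]; exact Algebra.mem_top
      refine Algebra.adjoin_induction
        (p := fun b _ => ∀ x y : V', Ψ (b • x) y = Ψ x (σ' b • y)) ?_ ?_ ?_ ?_ hb
      · rintro c hc x y
        rw [Set.mem_singleton_iff] at hc
        subst hc
        rw [hα]
        exact gal x y
      · intro r x y
        rw [hres, algebraMap_smul, algebraMap_smul, g3, g4]
      · intro b c _ _ hbP hcP x y
        rw [add_smul, g1, map_add, add_smul, g2, hbP, hcP]
      · intro b c _ _ hbP hcP x y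
        rw [mul_smul, hbP, hcP, ← mul_smul, mul_comm, ← map_mul]
    -- construct the hermitian form over E'
    let L : V' → V' → (E' →ₗ[E] E) := fun x y =>
      { toFun := fun a => Ψ x (a • y)
        map_add' := fun a b => by
          show Ψ x ((a + b) • y) = Ψ x (a • y) + Ψ x (b • y)
          rw [add_smul, g2]
        map_smul' := fun c a => by
          show Ψ x ((c • a) • y) = (RingHom.id E) c • Ψ x (a • y)
          rw [smul_assoc, g4, RingHom.id_apply, smul_eq_mul] }
    let Φ : V' → V' → E' := fun x y => ((Algebra.traceForm E E').toDual hB).symm (L x y)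
    have hkey : ∀ (x y : V') (a : E'), Algebra.trace E E' (Φ x y * a) = Ψ x (a • y) := by
      intro x y a
      have h := LinearMap.BilinForm.apply_toDual_symm_apply (hB := hB) (f := L x y) (v := a)
      rw [Algebra.traceForm_apply] at h
      exact h
    refine ⟨Φ, ⟨⟨?_, ?_, ?_, ?_, ?_⟩, ?_⟩, ?_⟩
    · intro x x' y
      apply uniq
      intro a
      rw [hkey, g1, ← hkey x y a, ← hkey x' y a, add_mul, map_add]
    · intro x y y'
      apply uniq
      intro a
      rw [hkey, smul_add, g2, ← hkey x y a, ← hkey x y' a, add_mul, map_add]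
    · intro b x y
      apply uniq
      intro a
      rw [hkey, hE', ← mul_smul, ← hkey x y (σ' b * a)]
      congr 1
      ring
    · intro b x y
      apply uniq
      intro a
      rw [hkey, smul_smul, ← hkey x y (a * b)]
      congr 1
      ring
    · intro x y
      apply uniq
      intro a
      have h1 : σ' (Φ x y) * a = σ' (Φ x y * σ' a) := by rw [map_mul, hσ']
      rw [hkey, h1, htr, hkey, ← hE']
      exact g5 _ _
    · intro x hx
      apply gnd x
      intro y
      have h := hkey x y 1
      rw [hx y, zero_mul, map_zero, one_smul] at h
      exact h.symm
    · funext x y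
      have h := hkey x y 1
      rw [mul_one, one_smul] at h
      exact h
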